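/- Let (G,N) be an equal order pair such that N is nilpotent, let p be a prime dividing the order of N, and let P be the (unique, hence normal in G) Sylow p-subgroup of N. Let Φ(P) denote the Frattini subgroup of P. If x ∈ G \ N is an element whose coset xN has order in G/N coprime to p (i.e., xN is a nontrivial p'-element of G/N), then for every v ∈ P with x⁻¹·v·x·v⁻¹ ∈ Φ(P), one has v ∈ Φ(P); that is, xN has no nontrivial fixed points on P/Φ(P). -/
import Mathlib


/-- `(G, N)` is an *equal order pair* if `N` is a proper, nontrivial, normal subgroup of `G`
and for every `x ∈ G \ N` and every `n ∈ N`, the order of `x * n` equals the order of `x`. -/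
def IsEqualOrderPair {G : Type*} [Group G] (N : Subgroup G) : Prop :=
  N.Normal ∧ N ≠ ⊥ ∧ N ≠ ⊤ ∧ ∀ x ∉ N, ∀ n ∈ N, orderOf (x * n) = orderOf x

theorem stmt16 {G : Type*} [Group G] [Finite G] (N : Subgroup G) [N.Normal]
    (hEOP : IsEqualOrderPair N) (hNnil : Group.IsNilpotent ↥N)
    (p : ℕ) (hp : p.Prime) (hpN : p ∣ Nat.card N)
    (P : Subgroup G) (hPle : P ≤ N) (hPp : IsPGroup p ↥P) (hPnormal : P.Normal)
    (hPmax : ∀ Q : Subgroup G, Q ≤ N → IsPGroup p ↥Q → Q ≤ P)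
    (x : G) (hx : x ∉ N)
    (hx' : Nat.Coprime (orderOf (QuotientGroup.mk x : G ⧸ N)) p) :
    ∀ v ∈ P, x⁻¹ * v * x * v⁻¹ ∈ (frattini ↥P).map P.subtype →
      v ∈ (frattini ↥P).map P.subtype := by
  intro v hv hvcomm
  haveI : P.Normal := hPnormal
  set Q : Subgroup G := (frattini ↥P).map P.subtype with hQdef
  haveI hQnormal : Q.Normal := inferInstance
  set m := orderOf x with hmdef
  have hm0 : m ≠ 0 := (orderOf_pos x).ne'
  -- Step A : p does not divide the order of x
  have hpm : ¬ p ∣ m := by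
    intro hpm
    set a := m.factorization p with hadef
    set m' := m / p ^ a with hm'def
    have hfac : p ^ a * m' = m := Nat.ordProj_mul_ordCompl_eq_self m p
    have hm'0 : m' ≠ 0 := by
      intro h; rw [h, mul_zero] at hfac; exact hm0 hfac.symm
    have ha1 : 1 ≤ a := hp.factorization_pos_of_dvd hm0 hpm
    have hpa1 : 1 < p ^ a :=
      Nat.one_lt_pow (by omega) hp.one_lt
    have hpm' : ¬ p ∣ m' := Nat.not_dvd_ordCompl hp hm0
    have hcop : Nat.Coprime (p ^ a) m' :=
      Nat.Coprime.pow_left a ((hp.coprime_iff_not_dvd).mpr hpm')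
    obtain ⟨k, hk1, hk2⟩ := Nat.chineseRemainder hcop 1 0
    -- hk1 : k ≡ 1 [MOD p^a], hk2 : k ≡ 0 [MOD m']
    have hm'k : m' ∣ k := (Nat.modEq_zero_iff_dvd).mp hk2
    have hcopk : Nat.Coprime (p ^ a) k := by
      have h := Nat.gcd_rec (p ^ a) k
      rw [Nat.Coprime, h, hk1, Nat.one_mod_eq_one.mpr hpa1.ne', Nat.gcd_one_left]
    have hgcd : Nat.gcd m k = m' := by
      rw [← hfac, Nat.Coprime.gcd_mul_left_cancel m' hcopk, Nat.gcd_eq_left hm'k]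
    have hw : orderOf (x ^ k) = p ^ a := by
      rw [orderOf_pow, ← hmdef, hgcd, ← hfac, Nat.mul_div_cancel _ (Nat.pos_of_ne_zero hm'0)]
    -- order of the image of x in the quotient divides m'
    have hr : orderOf (QuotientGroup.mk x : G ⧸ N) ∣ m :=
      orderOf_map_dvd (QuotientGroup.mk' N) x
    have hrm' : orderOf (QuotientGroup.mk x : G ⧸ N) ∣ m' :=
      (hx'.pow_right a).dvd_of_dvd_mul_left (by rw [hfac]; exact hr)
    have hrk : orderOf (QuotientGroup.mk x : G ⧸ N) ∣ k := hrm'.trans hm'k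
    have hwN : x ^ k ∈ N := by
      rw [← QuotientGroup.eq_one_iff]
      have : (QuotientGroup.mk x : G ⧸ N) ^ k = 1 := orderOf_dvd_iff_pow_eq_one.mp hrk
      simpa using this
    have hwP : x ^ k ∈ P := by
      refine hPmax (Subgroup.zpowers (x ^ k)) (Subgroup.zpowers_le.mpr hwN) ?_
        (Subgroup.mem_zpowers _)
      exact IsPGroup.of_card (by rw [Nat.card_zpowers, hw])
    have heq : orderOf (x * (x ^ k)⁻¹) = m :=
      hEOP.2.2.2 x hx _ (N.inv_mem hwN)
    have hxw : x * (x ^ k)⁻¹ = x ^ ((1 : ℤ) - k) := by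
      rw [zpow_sub, zpow_one, zpow_natCast]
    have hp1k : ((p : ℤ) ^ a) ∣ (1 : ℤ) - k := by
      have := hk1.dvd
      push_cast at this ⊢
      exact this
    have hdvd : orderOf (x * (x ^ k)⁻¹) ∣ m' := by
      rw [hxw]
      apply orderOf_dvd_iff_pow_eq_one.mpr
      obtain ⟨c, hc⟩ := hp1k
      rw [← zpow_natCast (x ^ ((1 : ℤ) - k)) m', ← zpow_mul]
      have he : ((1 : ℤ) - k) * m' = (m : ℤ) * c := by
        rw [hc, ← hfac]; push_cast; ring
      rw [he, zpow_mul, zpow_natCast, pow_orderOf_eq_one, one_zpow]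
    rw [heq] at hdvd
    have : m ≤ m' := Nat.le_of_dvd (Nat.pos_of_ne_zero hm'0) hdvd
    have : m' < m := by
      rw [hm'def]
      exact Nat.div_lt_self (Nat.pos_of_ne_zero hm0) hpa1
    omega
  -- Step B : expand (x*v)^m
  have hvN : v ∈ N := hPle hv
  have hA : ∀ i : ℕ, x⁻¹ ^ i * v * x ^ i * v⁻¹ ∈ Q := by
    intro i
    induction i with
    | zero => simpa using Q.one_mem
    | succ i ih =>
      have h1 : x⁻¹ ^ (i + 1) * v * x ^ (i + 1) * v⁻¹
          = (x⁻¹ * (x⁻¹ ^ i * v * x ^ i * v⁻¹) * x⁻¹⁻¹) * (x⁻¹ * v * x * v⁻¹) := by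
        group
      rw [h1]
      exact Q.mul_mem (hQnormal.conj_mem _ ih x⁻¹) hvcomm
  have hB : ∀ n : ℕ, ∃ q ∈ Q, (x * v) ^ n = x ^ n * v ^ n * q := by
    intro n
    induction n with
    | zero => exact ⟨1, Q.one_mem, by simp⟩
    | succ n ih =>
      obtain ⟨q, hq, hqe⟩ := ih
      refine ⟨(v ^ (n + 1))⁻¹ * (x⁻¹ ^ n * v * x ^ n * v⁻¹) * (v ^ (n + 1))⁻¹⁻¹ * q,
        Q.mul_mem (hQnormal.conj_mem _ (hA n) (v ^ (n + 1))⁻¹) hq, ?_⟩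
      have : (x * v) ^ (n + 1) = (x * v) * (x ^ n * v ^ n * q) := by
        rw [pow_succ', hqe]
      rw [this]
      group
  obtain ⟨q, hq, hqe⟩ := hB m
  have hxv : orderOf (x * v) = m := hEOP.2.2.2 x hx v hvN
  have hxvm : (x * v) ^ m = 1 := by rw [← hxv, pow_orderOf_eq_one]
  have hxm : x ^ m = 1 := pow_orderOf_eq_one x
  have hvmQ : v ^ m ∈ Q := by
    have h1 : (1 : G) = v ^ m * q := by rw [← hxvm, hqe, hxm, one_mul]
    have : v ^ m = q⁻¹ := by rw [eq_inv_iff_mul_eq_one, ← h1]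
    rw [this]; exact Q.inv_mem hq
  -- Step C : Bezout
  obtain ⟨t, hvt⟩ := hPp ⟨v, hv⟩
  have hvpt : v ^ (p ^ t) = 1 := by
    have := congrArg (Subtype.val) hvt
    simpa using this
  have hcop : IsCoprime (m : ℤ) ((p : ℤ) ^ t) := by
    rw [Int.isCoprime_iff_gcd_eq_one]
    have : Nat.Coprime m (p ^ t) := (((hp.coprime_iff_not_dvd).mpr hpm).symm).pow_right t
    rw [show ((p : ℤ) ^ t) = ((p ^ t : ℕ) : ℤ) by push_cast; ring, Int.gcd_natCast_natCast]
    exact this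
  obtain ⟨u, w, huw⟩ := hcop
  -- huw : u * m + w * p^t = 1
  have : v = (v ^ (m : ℤ)) ^ u * (v ^ ((p : ℤ) ^ t)) ^ w := by
    rw [← zpow_mul, ← zpow_mul, ← zpow_add, mul_comm ((m : ℤ)) u, mul_comm (((p : ℤ) ^ t)) w,
      huw, zpow_one]
  rw [this]
  have h2 : v ^ ((p : ℤ) ^ t) = 1 := by
    have : ((p : ℤ) ^ t) = ((p ^ t : ℕ) : ℤ) := by push_cast; ring
    rw [this, zpow_natCast, hvpt]
  rw [h2, one_zpow, mul_one]
  have h3 : v ^ ((m : ℤ)) ∈ Q := by rw [zpow_natCast]; exact hvmQ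
  exact Q.zpow_mem h3 u
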